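/- Let Λ be the adjacency matrix and H the MacWilliams matrix, and set ℓ_{X,Y} := (HΛH)_{X,Y}. Then for any nonzero (X,Y) ∈ F^δ × F^δ, q^δ ℓ_{X,Y} = Σ_{(Z₁,Z₂) ∈ (X,Y)^⊥} λ_{Z₁,Z₂} − (1/(q−1)) Σ_{(Z₁,Z₂) ∉ (X,Y)^⊥} λ_{Z₁,Z₂}, where (X,Y)^⊥ is the orthogonal of the line spanned by (X,Y) in F^{2δ}. Moreover q^δ ℓ_{0,0} = Σ_{(Z₁,Z₂)} λ_{Z₁,Z₂}. -/

import Mathlib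

open Matrix

open Classical in
/-- The (Hamming) weight enumerator of a subset `S ⊆ F^n`. -/
noncomputable def we {n : ℕ} {F : Type} [Fintype F] [DecidableEq F] [Zero F]
    (S : Set (Fin n → F)) : Polynomial ℂ :=
  ∑ a : Fin n → F, if a ∈ S then Polynomial.X ^ hammingNorm a else 0

lemma aux_char_sum_zero {F : Type} [Fintype F] [AddCommGroup F] (ψ : F → ℂ)
    (hadd : ∀ a b, ψ (a + b) = ψ a * ψ b) (b : F) (hb : ψ b ≠ 1) :
    ∑ a : F, ψ a = 0 := by
  have h : ψ b * ∑ a : F, ψ a = ∑ a : F, ψ a := by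
    rw [Finset.mul_sum]
    simp_rw [← hadd]
    exact Fintype.sum_equiv (Equiv.addLeft b) _ _ (fun a => rfl)
  have h2 : (ψ b - 1) * ∑ a : F, ψ a = 0 := by rw [sub_mul, one_mul, h, sub_self]
  exact (mul_eq_zero.mp h2).resolve_left (sub_ne_zero.mpr hb)

lemma aux_exists_tau_ne {p s : ℕ} [Fact p.Prime] (hs : 0 < s) {F : Type} [Field F] [Fintype F]
    [Algebra (ZMod p) F]
    (hq : Fintype.card F = p ^ s) (τ : F → ZMod p)
    (hτ : ∀ a : F, algebraMap (ZMod p) F (τ a) = ∑ i ∈ Finset.range s, a ^ p ^ i) :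
    ∃ a : F, τ a ≠ 0 := by
  by_contra hcon
  push_neg at hcon
  have heval : ∀ a : F, ∑ i ∈ Finset.range s, a ^ p ^ i = 0 := by
    intro a
    rw [← hτ a, hcon a, map_zero]
  set P : Polynomial F := ∑ i ∈ Finset.range s, Polynomial.X ^ p ^ i with hP
  have hpev : ∀ a : F, P.eval a = 0 := by
    intro a
    simp only [hP, Polynomial.eval_finset_sum, Polynomial.eval_pow, Polynomial.eval_X]
    exact heval a
  have hp2 : 1 < p := (Fact.out : p.Prime).one_lt
  have hdeg : P.natDegree < Fintype.card F := by
    have h1 : P.natDegree ≤ p ^ (s - 1) := by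
      apply Polynomial.natDegree_sum_le_of_forall_le
      intro i hi
      rw [Polynomial.natDegree_X_pow]
      apply Nat.pow_le_pow_right (by omega)
      simp only [Finset.mem_range] at hi
      omega
    calc P.natDegree ≤ p ^ (s - 1) := h1
      _ < p ^ s := Nat.pow_lt_pow_right hp2 (by omega)
      _ = Fintype.card F := hq.symm
  have hP0 : P = 0 :=
    Polynomial.eq_zero_of_natDegree_lt_card_of_eval_eq_zero P Function.injective_id
      (fun a => hpev a) hdeg
  have hc1 : P.coeff 1 = 1 := by
    simp only [hP, Polynomial.finset_sum_coeff, Polynomial.coeff_X_pow]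
    have : ∀ i ∈ Finset.range s, (if (1:ℕ) = p ^ i then (1:F) else 0) = if i = 0 then 1 else 0 := by
      intro i hi
      congr 1
      simp only [eq_iff_iff]
      constructor
      · intro h
        by_contra hi0
        have h2 : p ≤ p ^ i := Nat.le_self_pow hi0 p
        omega
      · rintro rfl; simp
    rw [Finset.sum_congr rfl this, Finset.sum_ite_eq' (Finset.range s) 0 (fun _ => (1:F))]
    simp [hs]
  rw [hP0] at hc1
  simp at hc1

lemma aux_final {F : Type} [Field F] [Fintype F] [DecidableEq F]
    (ψ : F → ℂ) (hψ0 : ψ 0 = 1)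
    (hpunct : ∀ t : F, t ≠ 0 →
      ∑ α ∈ Finset.univ.filter (fun α : F => α ≠ 0), ψ (α * t) = -1)
    {W : Type} [Fintype W] (t : W → F) (lam : W → Polynomial ℂ)
    (σ : F → W → W)
    (hbij : ∀ α : F, α ≠ 0 → Function.Bijective (σ α))
    (ht : ∀ α : F, α ≠ 0 → ∀ w, t (σ α w) = α * t w)
    (hlaminv : ∀ α : F, α ≠ 0 → ∀ w, lam (σ α w) = lam w) :
    ∑ w : W, Polynomial.C (ψ (t w)) * lam w
      = (∑ w : W, if t w = 0 then lam w else 0)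
        - Polynomial.C (((Fintype.card F : ℂ) - 1)⁻¹)
          * ∑ w : W, if t w = 0 then 0 else lam w := by
  classical
  have hq1 : ((Fintype.card F : ℂ) - 1) ≠ 0 := by
    have h2 : 1 < Fintype.card F := Fintype.one_lt_card
    have h3 : ((Fintype.card F : ℂ)) ≠ 1 := by exact_mod_cast Nat.ne_of_gt h2
    exact sub_ne_zero.mpr h3
  have hsplit : ∑ w : W, Polynomial.C (ψ (t w)) * lam w
      = (∑ w : W, if t w = 0 then Polynomial.C (ψ (t w)) * lam w else 0)
        + ∑ w : W, if t w = 0 then 0 else Polynomial.C (ψ (t w)) * lam w := by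
    rw [← Finset.sum_add_distrib]
    refine Finset.sum_congr rfl fun w _ => ?_
    split_ifs <;> simp
  have h1 : (∑ w : W, if t w = 0 then Polynomial.C (ψ (t w)) * lam w else 0)
      = ∑ w : W, if t w = 0 then lam w else 0 := by
    refine Finset.sum_congr rfl fun w _ => ?_
    split_ifs with h
    · rw [h, hψ0, Polynomial.C_1, one_mul]
    · rfl
  have hkey : Polynomial.C ((Fintype.card F : ℂ) - 1)
      * (∑ w : W, if t w = 0 then 0 else Polynomial.C (ψ (t w)) * lam w)
      = - ∑ w : W, if t w = 0 then (0 : Polynomial ℂ) else lam w := by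
    have hcard1 : ((Fintype.card F : ℂ) - 1)
        = ∑ _α ∈ Finset.univ.filter (fun α : F => α ≠ 0), (1:ℂ) := by
      rw [Finset.sum_const, nsmul_eq_mul, mul_one, Finset.filter_ne',
        Finset.card_erase_of_mem (Finset.mem_univ 0), Finset.card_univ]
      have h2 : 1 ≤ Fintype.card F := Fintype.card_pos
      push_cast [Nat.cast_sub h2]
      ring
    rw [hcard1, _root_.map_sum, Finset.sum_mul]
    have hreidx : ∀ α ∈ Finset.univ.filter (fun α : F => α ≠ 0),
        Polynomial.C (1:ℂ) * (∑ w : W, if t w = 0 then 0 else Polynomial.C (ψ (t w)) * lam w)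
        = ∑ w : W, if t w = 0 then 0 else Polynomial.C (ψ (α * t w)) * lam w := by
      intro α hα
      rw [Finset.mem_filter] at hα
      have hα0 : α ≠ 0 := hα.2
      rw [Polynomial.C_1, one_mul]
      refine (Fintype.sum_bijective (σ α) (hbij α hα0) _ _ ?_).symm
      intro w
      rw [ht α hα0 w, hlaminv α hα0 w]
      by_cases h : t w = 0
      · rw [if_pos h, if_pos (by rw [h, mul_zero])]
      · rw [if_neg h, if_neg (fun hc => h ((mul_eq_zero.mp hc).resolve_left hα0))]
    rw [Finset.sum_congr rfl hreidx, Finset.sum_comm]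
    have hinner : ∀ w : W, (∑ α ∈ Finset.univ.filter (fun α : F => α ≠ 0),
        if t w = 0 then (0 : Polynomial ℂ) else Polynomial.C (ψ (α * t w)) * lam w)
        = - (if t w = 0 then 0 else lam w) := by
      intro w
      by_cases h : t w = 0
      · simp [h]
      · simp only [if_neg h]
        rw [← Finset.sum_mul, ← _root_.map_sum, hpunct (t w) h]
        rw [_root_.map_neg, Polynomial.C_1, neg_one_mul]
    rw [Finset.sum_congr rfl (fun w _ => hinner w)]
    exact Finset.sum_neg_distrib _
  rw [hsplit, h1, sub_eq_add_neg]
  congr 1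
  have hC : Polynomial.C ((Fintype.card F : ℂ) - 1) ≠ 0 := Polynomial.C_ne_zero.mpr hq1
  apply mul_left_cancel₀ hC
  rw [hkey, mul_neg, ← mul_assoc, ← Polynomial.C_mul, mul_inv_cancel₀ hq1, Polynomial.C_1, one_mul]


set_option maxHeartbeats 2000000 in
theorem stmt_15 {p s k n : ℕ} [Fact p.Prime] (hs : 0 < s)
    {F : Type} [Field F] [Fintype F] [DecidableEq F] [CharP F p] [Algebra (ZMod p) F]
    (hq : Fintype.card F = p ^ s)
    (ζ : ℂ) (hζ : IsPrimitiveRoot ζ p)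
    (τ : F → ZMod p)
    (hτ : ∀ a : F, algebraMap (ZMod p) F (τ a) = ∑ i ∈ Finset.range s, a ^ p ^ i)
    (G : Matrix (Fin k) (Fin n) (Polynomial F))
    (d : Fin k → ℕ)
    (hGdeg : ∀ i j, (G i j).natDegree ≤ d i)
    (hGbasic : ∃ G' : Matrix (Fin n) (Fin k) (Polynomial F), G * G' = 1)
    (hGmin : LinearIndependent F (fun i : Fin k => fun j : Fin n => (G i j).coeff (d i)))
    (A : Matrix (Σ i, Fin (d i)) (Σ i, Fin (d i)) F)
    (B : Matrix (Fin k) (Σ i, Fin (d i)) F)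
    (Cm : Matrix (Σ i, Fin (d i)) (Fin n) F)
    (D : Matrix (Fin k) (Fin n) F)
    (hA : ∀ x y, A x y = if x.1 = y.1 ∧ (x.2 : ℕ) + 1 = (y.2 : ℕ) then 1 else 0)
    (hB : ∀ i y, B i y = if i = y.1 ∧ (y.2 : ℕ) = 0 then 1 else 0)
    (hC : ∀ x j, Cm x j = (G x.1 j).coeff ((x.2 : ℕ) + 1))
    (hD : ∀ i j, D i j = (G i j).coeff 0)
    (lam : (((Σ i, Fin (d i)) → F) × ((Σ i, Fin (d i)) → F)) → Polynomial ℂ)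
    (hlam : ∀ w, lam w
      = we {v | ∃ u : Fin k → F, w.2 = w.1 ᵥ* A + u ᵥ* B ∧ v = w.1 ᵥ* Cm + u ᵥ* D})
    (H : Matrix ((Σ i, Fin (d i)) → F) ((Σ i, Fin (d i)) → F) ℂ)
    (hH : ∀ X Y, H X Y = ((Real.sqrt (((p : ℝ) ^ s) ^ (∑ i, d i)))⁻¹ : ℂ)
        * ζ ^ (τ (∑ x, X x * Y x)).val)
    (Λ : Matrix ((Σ i, Fin (d i)) → F) ((Σ i, Fin (d i)) → F) (Polynomial ℂ))
    (hΛ : ∀ X Y, Λ X Y = lam (X, Y)) :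
    (∀ X Y : (Σ i, Fin (d i)) → F, ¬(X = 0 ∧ Y = 0) →
      Polynomial.C ((Fintype.card F : ℂ) ^ (∑ i, d i))
          * (H.map Polynomial.C * Λ * H.map Polynomial.C) X Y
        = (∑ w : ((Σ i, Fin (d i)) → F) × ((Σ i, Fin (d i)) → F),
            if (∑ x, X x * w.1 x) + (∑ x, Y x * w.2 x) = 0 then lam w else 0)
          - Polynomial.C (((Fintype.card F : ℂ) - 1)⁻¹)
            * (∑ w : ((Σ i, Fin (d i)) → F) × ((Σ i, Fin (d i)) → F),
                if (∑ x, X x * w.1 x) + (∑ x, Y x * w.2 x) = 0 then 0 else lam w)) ∧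
    Polynomial.C ((Fintype.card F : ℂ) ^ (∑ i, d i))
        * (H.map Polynomial.C * Λ * H.map Polynomial.C) 0 0
      = ∑ w : ((Σ i, Fin (d i)) → F) × ((Σ i, Fin (d i)) → F), lam w := by
  classical
  have hp2 : 1 < p := (Fact.out : p.Prime).one_lt
  haveI : NeZero p := ⟨by omega⟩
  set ψ : F → ℂ := fun a => ζ ^ (τ a).val with hψdef
  have hmod : ∀ m : ℕ, ζ ^ (m % p) = ζ ^ m := by
    intro m
    conv_rhs => rw [← Nat.mod_add_div m p]
    rw [pow_add, pow_mul, hζ.pow_eq_one, one_pow, mul_one]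
  have hτadd : ∀ a b : F, τ (a + b) = τ a + τ b := by
    intro a b
    apply (algebraMap (ZMod p) F).injective
    rw [map_add, hτ, hτ, hτ, ← Finset.sum_add_distrib]
    exact Finset.sum_congr rfl fun i _ => add_pow_char_pow a b p i
  have hψadd : ∀ a b : F, ψ (a + b) = ψ a * ψ b := by
    intro a b
    show ζ ^ (τ (a + b)).val = ζ ^ (τ a).val * ζ ^ (τ b).val
    rw [hτadd, ZMod.val_add, hmod, pow_add]
  have hτ0 : τ 0 = 0 := by
    have h := hτadd 0 0
    rw [add_zero] at h
    exact (add_eq_left.mp h.symm)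
  have hψ0 : ψ 0 = 1 := by
    show ζ ^ (τ 0).val = 1
    rw [hτ0, ZMod.val_zero, pow_zero]
  have hnt : ∃ a : F, ψ a ≠ 1 := by
    obtain ⟨a, ha⟩ := aux_exists_tau_ne hs hq τ hτ
    refine ⟨a, fun h1 => ha ?_⟩
    have hdvd : p ∣ (τ a).val := hζ.dvd_of_pow_eq_one _ h1
    have hlt : (τ a).val < p := ZMod.val_lt _
    have hv0 : (τ a).val = 0 := Nat.eq_zero_of_dvd_of_lt hdvd hlt
    exact (ZMod.val_eq_zero _).mp hv0
  have hsum0 : ∑ a : F, ψ a = 0 := by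
    obtain ⟨b, hb⟩ := hnt
    exact aux_char_sum_zero ψ hψadd b hb
  have hline : ∀ t : F, t ≠ 0 → ∑ α : F, ψ (α * t) = 0 := by
    intro t ht
    rw [← hsum0]
    exact Fintype.sum_equiv (Equiv.mulRight₀ t ht) _ _ (fun α => rfl)
  have hpunct : ∀ t : F, t ≠ 0 →
      ∑ α ∈ Finset.univ.filter (fun α : F => α ≠ 0), ψ (α * t) = -1 := by
    intro t ht
    have h0 := hline t ht
    rw [Finset.filter_ne']
    have h1 := Finset.sum_erase_add Finset.univ (fun α : F => ψ (α * t)) (Finset.mem_univ 0)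
    rw [h0] at h1
    simp only [zero_mul, hψ0] at h1
    exact eq_neg_of_add_eq_zero_left h1
  have hlaminv : ∀ (α : F), α ≠ 0 →
      ∀ w : (((Σ i, Fin (d i)) → F) × ((Σ i, Fin (d i)) → F)),
      lam (α • w.1, α • w.2) = lam w := by
    intro α hα w
    rw [hlam, hlam]
    have hnorm : ∀ a : Fin n → F, hammingNorm (α • a) = hammingNorm a := by
      intro a
      refine hammingNorm_smul (fun _ => fun x y hxy => ?_) a
      have hxy' : α * x = α * y := hxy
      exact mul_left_cancel₀ hα hxy'
    have hmem : ∀ a : Fin n → F,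
        ((α • a) ∈ {v | ∃ u : Fin k → F,
            (α • w.1, α • w.2).2 = (α • w.1, α • w.2).1 ᵥ* A + u ᵥ* B
            ∧ v = (α • w.1, α • w.2).1 ᵥ* Cm + u ᵥ* D})
        ↔ (a ∈ {v | ∃ u : Fin k → F, w.2 = w.1 ᵥ* A + u ᵥ* B ∧ v = w.1 ᵥ* Cm + u ᵥ* D}) := by
      intro a
      simp only [Set.mem_setOf_eq, Matrix.smul_vecMul]
      constructor
      · rintro ⟨u, h1, h2⟩
        refine ⟨α⁻¹ • u, ?_, ?_⟩
        · apply smul_right_injective ((Σ i, Fin (d i)) → F) hα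
          show α • w.2 = α • (w.1 ᵥ* A + (α⁻¹ • u) ᵥ* B)
          rw [smul_add, Matrix.smul_vecMul, smul_smul, mul_inv_cancel₀ hα, one_smul]
          exact h1
        · apply smul_right_injective (Fin n → F) hα
          show α • a = α • (w.1 ᵥ* Cm + (α⁻¹ • u) ᵥ* D)
          rw [smul_add, Matrix.smul_vecMul, smul_smul, mul_inv_cancel₀ hα, one_smul]
          exact h2
      · rintro ⟨u, h1, h2⟩
        exact ⟨α • u, by rw [Matrix.smul_vecMul, ← smul_add, h1],
          by rw [Matrix.smul_vecMul, ← smul_add, h2]⟩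
    unfold we
    refine (Fintype.sum_equiv (Equiv.piCongrRight fun _ : Fin n => Equiv.mulLeft₀ α hα) _ _ ?_).symm
    intro a
    rw [show (Equiv.piCongrRight fun _ : Fin n => Equiv.mulLeft₀ α hα) a = α • a from rfl,
      hnorm a]
    by_cases hx : a ∈ {v | ∃ u : Fin k → F, w.2 = w.1 ᵥ* A + u ᵥ* B ∧ v = w.1 ᵥ* Cm + u ᵥ* D}
    · rw [if_pos hx, if_pos ((hmem a).mpr hx)]
    · rw [if_neg hx, if_neg (fun hc => hx ((hmem a).mp hc))]
  have hcc : ((Real.sqrt (((p : ℝ) ^ s) ^ (∑ i, d i)))⁻¹ : ℂ)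
      * ((Real.sqrt (((p : ℝ) ^ s) ^ (∑ i, d i)))⁻¹ : ℂ)
      * ((Fintype.card F : ℂ) ^ (∑ i, d i)) = 1 := by
    have hr0 : (0:ℝ) ≤ ((p:ℝ) ^ s) ^ (∑ i, d i) := by positivity
    have hrne : ((p:ℝ) ^ s) ^ (∑ i, d i) ≠ 0 := by positivity
    have hcard : ((Fintype.card F : ℂ) ^ (∑ i, d i)) = ((((p:ℝ) ^ s) ^ (∑ i, d i) : ℝ) : ℂ) := by
      rw [hq]; push_cast; ring
    rw [hcard, ← Complex.ofReal_inv, ← Complex.ofReal_mul, ← Complex.ofReal_mul,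
      ← Complex.ofReal_one]
    congr 1
    rw [← mul_inv, Real.mul_self_sqrt hr0, inv_mul_cancel₀ hrne]
  have hmain : ∀ X Y : (Σ i, Fin (d i)) → F,
      Polynomial.C ((Fintype.card F : ℂ) ^ (∑ i, d i))
          * (H.map Polynomial.C * Λ * H.map Polynomial.C) X Y
      = ∑ w : ((Σ i, Fin (d i)) → F) × ((Σ i, Fin (d i)) → F),
          Polynomial.C (ψ ((∑ x, X x * w.1 x) + (∑ x, Y x * w.2 x))) * lam w := by
    intro X Y
    have e1 : (H.map Polynomial.C * Λ * H.map Polynomial.C) X Y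
        = ∑ j, ∑ i, Polynomial.C (H X i) * Λ i j * Polynomial.C (H j Y) := by
      simp [Matrix.mul_apply, Matrix.map_apply, Finset.sum_mul]
    rw [e1, Finset.mul_sum]
    simp_rw [Finset.mul_sum]
    rw [Finset.sum_comm, Fintype.sum_prod_type]
    refine Finset.sum_congr rfl fun i _ => Finset.sum_congr rfl fun j _ => ?_
    rw [hH, hH, hΛ]
    have hcom : (∑ x, j x * Y x) = ∑ x, Y x * j x :=
      Finset.sum_congr rfl fun x _ => mul_comm _ _
    rw [hcom]
    rw [hψadd]
    simp only [hψdef]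
    set cc : ℂ := ((Real.sqrt (((p : ℝ) ^ s) ^ (∑ i, d i)))⁻¹ : ℂ) with hccdef
    set z1 : ℂ := ζ ^ (τ (∑ x, X x * i x)).val with hz1def
    set z2 : ℂ := ζ ^ (τ (∑ x, Y x * j x)).val with hz2def
    set qd : ℂ := (Fintype.card F : ℂ) ^ (∑ i, d i) with hqddef
    have h1 : Polynomial.C (cc * cc * qd) = 1 := by rw [hcc, Polynomial.C_1]
    calc Polynomial.C qd * (Polynomial.C (cc * z1) * lam (i, j) * Polynomial.C (cc * z2))
        = Polynomial.C (cc * cc * qd) * (Polynomial.C (z1 * z2) * lam (i, j)) := by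
          simp only [Polynomial.C_mul]; ring
      _ = Polynomial.C (z1 * z2) * lam (i, j) := by rw [h1, one_mul]
  have hbij : ∀ α : F, α ≠ 0 → Function.Bijective
      (fun w : ((Σ i, Fin (d i)) → F) × ((Σ i, Fin (d i)) → F) => (α • w.1, α • w.2)) := by
    intro α hα
    refine Function.bijective_iff_has_inverse.mpr ⟨fun w => (α⁻¹ • w.1, α⁻¹ • w.2), ?_, ?_⟩
    · intro w
      simp [smul_smul, inv_mul_cancel₀ hα]
    · intro w
      simp [smul_smul, mul_inv_cancel₀ hα]
  constructor
  · intro X Y _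
    rw [hmain X Y]
    have ht' : ∀ α : F, α ≠ 0 →
        ∀ w : ((Σ i, Fin (d i)) → F) × ((Σ i, Fin (d i)) → F),
        ((∑ x, X x * (α • w.1) x) + (∑ x, Y x * (α • w.2) x))
          = α * ((∑ x, X x * w.1 x) + (∑ x, Y x * w.2 x)) := by
      intro α hα w
      simp only [Pi.smul_apply, smul_eq_mul]
      rw [mul_add, Finset.mul_sum, Finset.mul_sum]
      congr 1 <;> exact Finset.sum_congr rfl fun x _ => by ring
    have happ := aux_final ψ hψ0 hpunct
      (W := ((Σ i, Fin (d i)) → F) × ((Σ i, Fin (d i)) → F))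
      (fun w => (∑ x, X x * w.1 x) + (∑ x, Y x * w.2 x)) lam
      (fun α w => (α • w.1, α • w.2)) hbij
      (fun α hα w => ht' α hα w) (fun α hα w => hlaminv α hα w)
    exact happ
  · rw [hmain 0 0]
    refine Finset.sum_congr rfl fun w _ => ?_
    simp [hψ0]
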